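/- Let d ≥ 7 be an integer. There exists a constant C = C(d) > 0 such that for all v, w ∈ ℤ^d: the function x ↦ ⟨v−x⟩^(6−2d) · ⟨x−w⟩^(2−d) is summable over ℤ^d and ∑'_{x ∈ ℤ^d} ⟨v−x⟩^(6−2d) · ⟨x−w⟩^(2−d) ≤ C · ⟨v−w⟩^(2−d). -/

import Mathlib

/-- Euclidean norm of a lattice point of `ℤ^d`. -/
noncomputable def euclNorm {d : ℕ} (x : Fin d → ℤ) : ℝ :=
  Real.sqrt (∑ i, ((x i : ℝ)) ^ 2)

/-- The "Japanese bracket" `⟨x⟩ = ‖x‖ + 1`. -/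
noncomputable def jap {d : ℕ} (x : Fin d → ℤ) : ℝ := euclNorm x + 1

/-- Sup norm of a lattice point of `ℤ^d`. -/
noncomputable def supNorm {d : ℕ} (x : Fin d → ℤ) : ℝ :=
  ((Finset.univ.sup (fun i => (x i).natAbs) : ℕ) : ℝ)

/-- The sup-norm box `B_y(M)` of radius `M` centred at `y`. -/
def latBox {d : ℕ} (y : Fin d → ℤ) (M : ℝ) : Set (Fin d → ℤ) :=
  {x | supNorm (x - y) ≤ M}

/-- The inner vertex boundary `∂B_y(M)` of the box `B_y(M)`. -/
def latBdry {d : ℕ} (y : Fin d → ℤ) (M : ℝ) : Set (Fin d → ℤ) :=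
  {x | x ∈ latBox y M ∧ ∃ x', x' ∉ latBox y M ∧ (∑ i, |x i - x' i|) = 1}

open Real

lemma one_le_jap {d : ℕ} (x : Fin d → ℤ) : 1 ≤ jap x :=
  le_add_of_nonneg_left (Real.sqrt_nonneg _)

lemma jap_pos {d : ℕ} (x : Fin d → ℤ) : 0 < jap x :=
  lt_of_lt_of_le one_pos (one_le_jap x)

lemma oneD (q : ℝ) (hq : q < -1) : Summable (fun n : ℤ => ((|n| : ℝ) + 1) ^ q) := by
  have h : Summable (fun n : ℕ => ((n : ℝ)) ^ q) := Real.summable_nat_rpow.mpr hq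
  have h2 := h.comp_injective (add_left_injective 1)
  apply Summable.of_nat_of_neg
  · apply h2.congr
    intro n
    simp only [Function.comp]
    push_cast
    rw [abs_of_nonneg (Nat.cast_nonneg n)]
  · apply h2.congr
    intro n
    simp only [Function.comp]
    push_cast
    rw [abs_neg, abs_of_nonneg (Nat.cast_nonneg n)]

lemma piSum (q : ℝ) (hq : q < -1) :
    ∀ n : ℕ, Summable (fun x : Fin n → ℤ => ∏ i, ((|x i| : ℝ) + 1) ^ q) := by
  intro n
  induction n with
  | zero => exact summable_of_finite_support (Set.toFinite _)
  | succ n ih =>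
      have h := (oneD q hq).mul_of_nonneg ih
        (fun n => rpow_nonneg (by positivity) _)
        (fun x => Finset.prod_nonneg fun i _ => rpow_nonneg (by positivity) _)
      have := ((Fin.consEquiv (fun _ : Fin (n + 1) => ℤ)).symm.summable_iff (f := fun p : ℤ × (Fin n → ℤ) =>
          ((|p.1| : ℝ) + 1) ^ q * ∏ i, ((|p.2 i| : ℝ) + 1) ^ q)).mpr h
      apply this.congr
      intro x
      simp [Function.comp, Fin.consEquiv, Fin.prod_univ_succ]
      exact Or.inl (Finset.prod_congr rfl fun i _ => rfl)

lemma coord_le_jap {d : ℕ} (x : Fin d → ℤ) (i : Fin d) :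
    ((|x i| : ℝ) + 1) ≤ jap x := by
  have h1 : ((x i : ℝ)) ^ 2 ≤ ∑ j, ((x j : ℝ)) ^ 2 :=
    Finset.single_le_sum (f := fun j => ((x j : ℝ)) ^ 2)
      (fun j _ => sq_nonneg _) (Finset.mem_univ i)
  have h2 : (|x i| : ℝ) ≤ euclNorm x := by
    have := Real.sqrt_le_sqrt h1
    rw [Real.sqrt_sq_eq_abs] at this
    unfold euclNorm
    push_cast
    exact this
  unfold jap; linarith

lemma summable_jap_rpow (d : ℕ) (hd : 0 < d) (r : ℝ) (hr : r / d < -1) (hr0 : r ≤ 0) :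
    Summable (fun x : Fin d → ℤ => jap x ^ r) := by
  have hdr : (d : ℝ) ≠ 0 := Nat.cast_ne_zero.mpr hd.ne'
  apply Summable.of_nonneg_of_le (fun x => rpow_nonneg (jap_pos x).le r)
    (fun x => ?_) (piSum (r / d) hr d)
  have hprod : ∏ i, ((|x i| : ℝ) + 1) ≤ jap x ^ d := by
    calc ∏ i, ((|x i| : ℝ) + 1) ≤ ∏ _i : Fin d, jap x :=
          Finset.prod_le_prod (fun i _ => by positivity) (fun i _ => coord_le_jap x i)
      _ = jap x ^ d := by simp
  have hprodpos : (0:ℝ) < ∏ i, ((|x i| : ℝ) + 1) :=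
    Finset.prod_pos fun i _ => by positivity
  have key : jap x ^ r ≤ (∏ i, ((|x i| : ℝ) + 1)) ^ (r / d) := by
    have h1 : jap x ^ r = (jap x ^ (d : ℕ)) ^ (r / d) := by
      rw [← Real.rpow_natCast (jap x) d, ← Real.rpow_mul (jap_pos x).le]
      congr 1
      field_simp
    rw [h1]
    exact Real.rpow_le_rpow_of_nonpos hprodpos hprod
      (div_nonpos_of_nonpos_of_nonneg hr0 (Nat.cast_nonneg d))
  calc jap x ^ r ≤ (∏ i, ((|x i| : ℝ) + 1)) ^ (r / d) := key
    _ = ∏ i, ((|x i| : ℝ) + 1) ^ (r / d) :=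
        (Real.finset_prod_rpow Finset.univ (fun i => ((|x i| : ℝ) + 1))
          (fun i _ => by positivity) (r / d)).symm

lemma euclNorm_triangle {d : ℕ} (a b : Fin d → ℤ) :
    euclNorm (a + b) ≤ euclNorm a + euclNorm b := by
  set f : (Fin d → ℤ) → EuclideanSpace ℝ (Fin d) :=
    fun x => (WithLp.equiv 2 _).symm (fun i => (x i : ℝ)) with hf
  have hnorm : ∀ x : Fin d → ℤ, euclNorm x = ‖f x‖ := by
    intro x
    rw [EuclideanSpace.norm_eq]
    unfold euclNorm
    congr 1
    exact Finset.sum_congr rfl fun i _ => by simp [hf, sq_abs]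
  have hadd : f (a + b) = f a + f b := by
    ext i
    simp [hf]
  rw [hnorm, hnorm, hnorm, hadd]
  exact norm_add_le _ _

lemma key_ineq (p q : ℝ) (hp : p ≤ 0) (hqp : q - p ≤ 0)
    (a b c : ℝ) (ha : 1 ≤ a) (hb : 1 ≤ b) (hc : 0 < c) (habc : c ≤ a + b) :
    a ^ q * b ^ p ≤ (c / 2) ^ p * (a ^ q + b ^ q) := by
  have ha0 : (0:ℝ) < a := lt_of_lt_of_le one_pos ha
  have hb0 : (0:ℝ) < b := lt_of_lt_of_le one_pos hb
  have hc2 : (0:ℝ) < c / 2 := by linarith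
  have haq : (0:ℝ) ≤ a ^ q := rpow_nonneg ha0.le q
  have hbq : (0:ℝ) ≤ b ^ q := rpow_nonneg hb0.le q
  by_cases h : c / 2 ≤ a
  · have h1 : a ^ p ≤ (c / 2) ^ p := Real.rpow_le_rpow_of_nonpos hc2 h hp
    have hmid : a ^ (q - p) * b ^ p ≤ a ^ q + b ^ q := by
      rcases le_total a b with hab | hab
      · have h2 : b ^ p ≤ a ^ p := Real.rpow_le_rpow_of_nonpos ha0 hab hp
        calc a ^ (q - p) * b ^ p ≤ a ^ (q - p) * a ^ p :=
              mul_le_mul_of_nonneg_left h2 (rpow_nonneg ha0.le _)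
          _ = a ^ q := by rw [← Real.rpow_add ha0]; ring_nf
          _ ≤ a ^ q + b ^ q := le_add_of_nonneg_right hbq
      · have h2 : a ^ (q - p) ≤ b ^ (q - p) := Real.rpow_le_rpow_of_nonpos hb0 hab hqp
        calc a ^ (q - p) * b ^ p ≤ b ^ (q - p) * b ^ p :=
              mul_le_mul_of_nonneg_right h2 (rpow_nonneg hb0.le _)
          _ = b ^ q := by rw [← Real.rpow_add hb0]; ring_nf
          _ ≤ a ^ q + b ^ q := le_add_of_nonneg_left haq
    calc a ^ q * b ^ p = a ^ p * (a ^ (q - p) * b ^ p) := by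
          rw [← mul_assoc, ← Real.rpow_add ha0]; ring_nf
      _ ≤ (c / 2) ^ p * (a ^ q + b ^ q) :=
          mul_le_mul h1 hmid (by positivity) (rpow_nonneg hc2.le p)
  · have hb2 : c / 2 ≤ b := by linarith
    have h1 : b ^ p ≤ (c / 2) ^ p := Real.rpow_le_rpow_of_nonpos hc2 hb2 hp
    calc a ^ q * b ^ p ≤ a ^ q * (c / 2) ^ p := mul_le_mul_of_nonneg_left h1 haq
      _ = (c / 2) ^ p * a ^ q := by ring
      _ ≤ (c / 2) ^ p * (a ^ q + b ^ q) :=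
          mul_le_mul_of_nonneg_left (le_add_of_nonneg_right hbq) (rpow_nonneg hc2.le p)

lemma jap_triangle {d : ℕ} (v w x : Fin d → ℤ) :
    jap (v - w) ≤ jap (v - x) + jap (x - w) := by
  have h := euclNorm_triangle (v - x) (x - w)
  rw [sub_add_sub_cancel] at h
  unfold jap
  linarith

lemma half_rpow_le (c : ℝ) (hc : 0 < c) (d : ℕ) (p : ℝ) (hp : -p ≤ d) :
    (c / 2) ^ p ≤ 2 ^ d * c ^ p := by
  have h1 : (c / 2) ^ p = c ^ p * (2:ℝ) ^ (-p) := by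
    rw [Real.div_rpow hc.le (by norm_num), Real.rpow_neg (by norm_num), div_eq_mul_inv]
  rw [h1]
  have h2 : (2:ℝ) ^ (-p) ≤ (2:ℝ) ^ (d:ℝ) :=
    Real.rpow_le_rpow_of_exponent_le one_le_two hp
  rw [Real.rpow_natCast] at h2
  calc c ^ p * (2:ℝ) ^ (-p) ≤ c ^ p * 2 ^ d :=
        mul_le_mul_of_nonneg_left h2 (rpow_nonneg hc.le p)
    _ = 2 ^ d * c ^ p := by ring

theorem stmt13 (d : ℕ) (hd : 7 ≤ d) :
    ∃ C : ℝ, 0 < C ∧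
      ∀ v w : Fin d → ℤ,
        Summable (fun x : Fin d → ℤ =>
            jap (v - x) ^ (6 - 2 * (d : ℝ)) * jap (x - w) ^ (2 - (d : ℝ))) ∧
          (∑' x : Fin d → ℤ, jap (v - x) ^ (6 - 2 * (d : ℝ)) * jap (x - w) ^ (2 - (d : ℝ))) ≤
            C * jap (v - w) ^ (2 - (d : ℝ)) := by
  have hd0 : 0 < d := by omega
  have hdp : (7:ℝ) ≤ (d:ℝ) := by exact_mod_cast hd
  set q : ℝ := 6 - 2 * (d:ℝ) with hqdef
  set p : ℝ := 2 - (d:ℝ) with hpdef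
  have hq_div : q / (d:ℝ) < -1 := by
    rw [div_lt_iff₀ (by positivity)]
    simp only [hqdef]
    nlinarith
  have hq0 : q ≤ 0 := by simp only [hqdef]; linarith
  have hp0 : p ≤ 0 := by simp only [hpdef]; linarith
  have hqp : q - p ≤ 0 := by simp only [hqdef, hpdef]; linarith
  have hS : Summable (fun x : Fin d → ℤ => jap x ^ q) :=
    summable_jap_rpow d hd0 q hq_div hq0
  set S : ℝ := ∑' x : Fin d → ℤ, jap x ^ q with hSdef
  have hS0 : 0 ≤ S := tsum_nonneg fun x => rpow_nonneg (jap_pos x).le q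
  refine ⟨2 ^ d * (2 * S + 1), by positivity, fun v w => ?_⟩
  have hA : Summable (fun x : Fin d → ℤ => jap (v - x) ^ q) := by
    have := ((Equiv.subLeft v).summable_iff
      (f := fun y : Fin d → ℤ => jap y ^ q)).mpr hS
    exact this.congr fun x => rfl
  have hB : Summable (fun x : Fin d → ℤ => jap (x - w) ^ q) := by
    have := ((Equiv.subRight w).summable_iff
      (f := fun y : Fin d → ℤ => jap y ^ q)).mpr hS
    exact this.congr fun x => rfl
  have hc := jap_pos (v - w)
  have hpt : ∀ x : Fin d → ℤ, jap (v - x) ^ q * jap (x - w) ^ p ≤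
      2 ^ d * jap (v - w) ^ p * (jap (v - x) ^ q + jap (x - w) ^ q) := by
    intro x
    have h1 := key_ineq p q hp0 hqp (jap (v - x)) (jap (x - w)) (jap (v - w))
      (one_le_jap _) (one_le_jap _) hc (jap_triangle v w x)
    have h2 : (jap (v - w) / 2) ^ p ≤ 2 ^ d * jap (v - w) ^ p :=
      half_rpow_le _ hc d p (by simp only [hpdef]; push_cast; linarith)
    have h3 : 0 ≤ jap (v - x) ^ q + jap (x - w) ^ q :=
      add_nonneg (rpow_nonneg (jap_pos _).le q) (rpow_nonneg (jap_pos _).le q)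
    calc jap (v - x) ^ q * jap (x - w) ^ p
        ≤ (jap (v - w) / 2) ^ p * (jap (v - x) ^ q + jap (x - w) ^ q) := h1
      _ ≤ 2 ^ d * jap (v - w) ^ p * (jap (v - x) ^ q + jap (x - w) ^ q) :=
          mul_le_mul_of_nonneg_right h2 h3
  have hD : Summable (fun x : Fin d → ℤ =>
      2 ^ d * jap (v - w) ^ p * (jap (v - x) ^ q + jap (x - w) ^ q)) :=
    (hA.add hB).mul_left _
  have hnn : ∀ x : Fin d → ℤ, 0 ≤ jap (v - x) ^ q * jap (x - w) ^ p :=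
    fun x => mul_nonneg (rpow_nonneg (jap_pos _).le q) (rpow_nonneg (jap_pos _).le p)
  have hsum : Summable (fun x : Fin d → ℤ => jap (v - x) ^ q * jap (x - w) ^ p) :=
    Summable.of_nonneg_of_le hnn hpt hD
  refine ⟨hsum, ?_⟩
  have h1 : (∑' x : Fin d → ℤ, jap (v - x) ^ q * jap (x - w) ^ p) ≤
      ∑' x : Fin d → ℤ, 2 ^ d * jap (v - w) ^ p * (jap (v - x) ^ q + jap (x - w) ^ q) :=
    Summable.tsum_le_tsum hpt hsum hD
  have hAv : (∑' x : Fin d → ℤ, jap (v - x) ^ q) = S := by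
    rw [hSdef]
    exact (Equiv.subLeft v).tsum_eq (fun y : Fin d → ℤ => jap y ^ q)
  have hBw : (∑' x : Fin d → ℤ, jap (x - w) ^ q) = S := by
    rw [hSdef]
    exact (Equiv.subRight w).tsum_eq (fun y : Fin d → ℤ => jap y ^ q)
  have h2 : (∑' x : Fin d → ℤ,
      2 ^ d * jap (v - w) ^ p * (jap (v - x) ^ q + jap (x - w) ^ q)) =
      2 ^ d * jap (v - w) ^ p * (S + S) := by
    rw [tsum_mul_left, Summable.tsum_add hA hB, hAv, hBw]
  have hcp : (0:ℝ) < jap (v - w) ^ p := rpow_pos_of_pos hc p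
  calc (∑' x : Fin d → ℤ, jap (v - x) ^ q * jap (x - w) ^ p)
      ≤ 2 ^ d * jap (v - w) ^ p * (S + S) := by rw [← h2]; exact h1
    _ ≤ 2 ^ d * (2 * S + 1) * jap (v - w) ^ p := by
        have h4 : (0:ℝ) < 2 ^ d := by positivity
        nlinarith
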